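/- Let E be a module with a bilinear bracket [·,·] and let I : E → E be a linear map with vanishing Nijenhuis torsion. Then for all natural numbers m, n and all X, Y in E: [X,Y]_{I^m, I^n} = [X,Y]_{I^{m+n}}, i.e. deforming successively by I^m and then by I^n equals a single deformation by I^{m+n}. -/

import Mathlib

variable {R : Type*} [CommRing R] {E : Type*} [AddCommGroup E] [Module R E]

/-- The underlying binary operation of a bilinear bracket. -/
def br2 (b : E →ₗ[R] E →ₗ[R] E) : E → E → E := fun x y => b x y

/-- Deformation of a bracket `b` by an endomorphism `I`:
`[X,Y]_I = [IX,Y] + [X,IY] - I [X,Y]`. -/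
def deform (I : Module.End R E) (b : E → E → E) : E → E → E :=
  fun X Y => b (I X) Y + b X (I Y) - I (b X Y)

/-- Nijenhuis torsion of `I` with respect to the bracket `b`. -/
def torsion (I : Module.End R E) (b : E → E → E) : E → E → E :=
  fun X Y => b (I X) (I Y) - I (deform I b X Y)

lemma pow_comm_apply (I : Module.End R E) (n : ℕ) (z : E) :
    (I ^ n) (I z) = I ((I ^ n) z) := by
  have : (I ^ n * I) z = (I * I ^ n) z := by
    rw [Commute.eq (Commute.pow_left rfl n)]
  simpa [Module.End.mul_apply] using this

lemma key1 (b : E →ₗ[R] E →ₗ[R] E) (I : Module.End R E)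
    (h : ∀ X Y : E, torsion I (br2 b) X Y = 0) (n : ℕ) (X Y : E) :
    b (I X) ((I ^ n) Y)
      = (I ^ n) (b (I X) Y) + I (b X ((I ^ n) Y)) - I ((I ^ n) (b X Y)) := by
  induction n generalizing Y with
  | zero => simp
  | succ n ih =>
    have hIY : (I ^ (n + 1)) Y = (I ^ n) (I Y) := by
      rw [pow_succ, Module.End.mul_apply]
    have ht := h X Y
    simp only [torsion, deform, br2, sub_eq_zero] at ht
    rw [hIY, ih (I Y), ht]
    simp only [map_add, map_sub, pow_succ, Module.End.mul_apply, pow_comm_apply]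
    abel

lemma key (b : E →ₗ[R] E →ₗ[R] E) (I : Module.End R E)
    (h : ∀ X Y : E, torsion I (br2 b) X Y = 0) (m n : ℕ) (X Y : E) :
    b ((I ^ m) X) ((I ^ n) Y)
      = (I ^ n) (b ((I ^ m) X) Y) + (I ^ m) (b X ((I ^ n) Y))
        - (I ^ n) ((I ^ m) (b X Y)) := by
  induction m generalizing X with
  | zero => simp
  | succ m ih =>
    have hIX : (I ^ (m + 1)) X = (I ^ m) (I X) := by
      rw [pow_succ, Module.End.mul_apply]
    have hk1 := key1 b I h n X Y
    have hcomm : ∀ z : E, (I ^ n) ((I ^ m) z) = (I ^ m) ((I ^ n) z) := by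
      intro z
      have : (I ^ n * I ^ m) z = (I ^ m * I ^ n) z := by
        rw [Commute.eq (Commute.pow_pow_self I n m)]
      simpa [Module.End.mul_apply] using this
    rw [hIX, ih (I X), hk1]
    simp only [map_add, map_sub, pow_succ, Module.End.mul_apply, hcomm, pow_comm_apply]
    abel

theorem stmt9 (b : E →ₗ[R] E →ₗ[R] E) (I : Module.End R E)
    (h : ∀ X Y : E, torsion I (br2 b) X Y = 0) (m n : ℕ) (X Y : E) :
    deform (I ^ n) (deform (I ^ m) (br2 b)) X Y = deform (I ^ (m + n)) (br2 b) X Y := by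
  simp only [deform, br2]
  have hcomm : ∀ z : E, (I ^ n) ((I ^ m) z) = (I ^ m) ((I ^ n) z) := by
    intro z
    have : (I ^ n * I ^ m) z = (I ^ m * I ^ n) z := by
      rw [Commute.eq (Commute.pow_pow_self I n m)]
    simpa [Module.End.mul_apply] using this
  rw [key b I h m n X Y, key b I h n m X Y]
  simp only [pow_add, Module.End.mul_apply, map_add, map_sub, hcomm]
  abel
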